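/- Half-graph witness construction: For every positive integer m, set N = 2^(m+1) − 2 and k = 2^m. There exist vectors x_1,…,x_k and y_1,…,y_k in the Euclidean space ℝ^N such that ‖x_i‖ = 1 and ‖y_i‖ ≤ 1 for all i, and for all 1 ≤ i < j ≤ k one has ⟪x_i, y_j⟫ = 1/m and ⟪x_j, y_i⟫ = 0; in particular ⟪x_i, y_j⟫ − ⟪x_j, y_i⟫ = 1/m for all i < j. -/

import Mathlib

open Finset

def bitf (m i p : ℕ) : Bool := i.testBit (m - 1 - p)

lemma highbit {a k m : ℕ} (ha : a < 2 ^ m) (hk : m ≤ k) : a.testBit k = false :=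
  Nat.testBit_lt_two_pow (lt_of_lt_of_le ha (Nat.pow_le_pow_right (by norm_num) hk))

lemma key2 {m a b p : ℕ} (ha : a < 2 ^ m) (hb : b < 2 ^ m) (hab : a < b) (hp : p < m)
    (hpre : ∀ q < p, bitf m a q = bitf m b q) (h1 : bitf m b p = false)
    (h2 : bitf m a p = true) : False := by
  have : b < a := by
    refine Nat.lt_of_testBit (m - 1 - p) h1 h2 (fun j hj => ?_)
    rcases lt_or_ge j m with hjm | hjm
    · have hq : m - 1 - j < p := by omega
      have := (hpre _ hq).symm
      unfold bitf at this
      rwa [show m - 1 - (m - 1 - j) = j by omega] at this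
    · rw [highbit ha hjm, highbit hb hjm]
  omega

lemma key {m a b : ℕ} (ha : a < 2 ^ m) (hb : b < 2 ^ m) (hab : a < b) :
    ∃ p0 < m, ∀ p < m,
      (((∀ q < p, bitf m a q = bitf m b q) ∧ bitf m a p = false ∧ bitf m b p = true) ↔ p = p0) := by
  classical
  set S := (range m).filter (fun k => a.testBit k ≠ b.testBit k) with hS
  have hSne : S.Nonempty := by
    by_contra h
    have : a = b := by
      apply Nat.eq_of_testBit_eq
      intro k
      by_contra hk
      rcases lt_or_ge k m with hkm | hkm
      · exact h ⟨k, by simp [hS, hkm, hk]⟩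
      · rw [highbit ha hkm, highbit hb hkm] at hk; exact hk rfl
    omega
  set K := S.max' hSne with hKdef
  have hKS : K ∈ S := S.max'_mem hSne
  have hKm : K < m := by simpa [hS] using (mem_filter.mp hKS).1
  have hKne : a.testBit K ≠ b.testBit K := (mem_filter.mp hKS).2
  have hKmax : ∀ k ∈ S, k ≤ K := fun k hk => S.le_max' k hk
  have heq_above : ∀ j, K < j → a.testBit j = b.testBit j := by
    intro j hj
    rcases lt_or_ge j m with hjm | hjm
    · by_contra hne
      exact absurd (hKmax j (mem_filter.mpr ⟨mem_range.mpr hjm, hne⟩)) (by omega)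
    · rw [highbit ha hjm, highbit hb hjm]
  have hKbits : a.testBit K = false ∧ b.testBit K = true := by
    rcases Bool.eq_false_or_eq_true (a.testBit K) with h | h <;>
      rcases Bool.eq_false_or_eq_true (b.testBit K) with h' | h'
    · exact absurd (h.trans h'.symm) hKne
    · have : b < a := Nat.lt_of_testBit K h' h (fun j hj => (heq_above j hj).symm)
      omega
    · exact ⟨h, h'⟩
    · exact absurd (h.trans h'.symm) hKne
  refine ⟨m - 1 - K, by omega, fun p hp => ?_⟩
  constructor
  · rintro ⟨hpre, hfa, htb⟩
    have hmem : m - 1 - p ∈ S := by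
      refine mem_filter.mpr ⟨mem_range.mpr (by omega), ?_⟩
      unfold bitf at hfa htb; rw [hfa, htb]; simp
    have hle : m - 1 - p ≤ K := hKmax _ hmem
    have : ¬ (m - 1 - p < K) := by
      intro hlt
      have hq : m - 1 - K < p := by omega
      have := hpre _ hq
      unfold bitf at this
      rw [show m - 1 - (m - 1 - K) = K by omega] at this
      exact hKne this
    omega
  · rintro rfl
    have hKp : m - 1 - (m - 1 - K) = K := by omega
    refine ⟨fun q hq => ?_, ?_, ?_⟩
    · have : K < m - 1 - q := by omega
      have := heq_above _ this
      unfold bitf; exact this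
    · unfold bitf; rw [hKp]; exact hKbits.1
    · unfold bitf; rw [hKp]; exact hKbits.2

def pre (m i p : ℕ) : Fin p → Bool := fun q => bitf m i q

abbrev Etyp (m : ℕ) := Σ p : Fin m, ((Fin p.1 → Bool) × Bool)

lemma card_Etyp (m : ℕ) : Fintype.card (Etyp m) = 2 ^ (m + 1) - 2 := by
  have hgeom : ∑ k ∈ Finset.range m, 2 ^ k = 2 ^ m - 1 := by
    simpa using Nat.geomSum_eq le_rfl m
  have h1 : ∀ p : Fin m, Fintype.card ((Fin p.1 → Bool) × Bool) = 2 ^ p.1 * 2 := by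
    intro p
    simp [Fintype.card_prod, Fintype.card_fun]
  rw [Fintype.card_sigma]
  simp only [h1]
  rw [Fin.sum_univ_eq_sum_range (fun k => 2 ^ k * 2), ← Finset.sum_mul, hgeom]
  have : 2 ^ (m + 1) = 2 ^ m * 2 := by ring
  have h2 : 1 ≤ 2 ^ m := Nat.one_le_two_pow
  omega

noncomputable def Xv (m i : ℕ) : EuclideanSpace ℝ (Etyp m) :=
  WithLp.toLp 2 fun e : Etyp m => if e.2 = (pre m i e.1, bitf m i e.1) then (Real.sqrt m)⁻¹ else 0

noncomputable def Yv (m i : ℕ) : EuclideanSpace ℝ (Etyp m) :=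
  WithLp.toLp 2 fun e : Etyp m => if bitf m i e.1 = true ∧ e.2 = (pre m i e.1, false) then (Real.sqrt m)⁻¹ else 0

lemma rsq (m : ℕ) (hm : 0 < m) : ((Real.sqrt m)⁻¹ : ℝ) ^ 2 = 1 / m := by
  rw [inv_pow, Real.sq_sqrt (by positivity)]
  simp

lemma norm_Xv (m i : ℕ) (hm : 0 < m) : ‖Xv m i‖ = 1 := by
  rw [EuclideanSpace.norm_eq]
  have : ∑ e : Etyp m, ‖Xv m i e‖ ^ 2 = 1 := by
    rw [← Finset.univ_sigma_univ, Finset.sum_sigma]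
    have hins : ∀ p : Fin m, ∑ z : (Fin p.1 → Bool) × Bool,
        ‖Xv m i ⟨p, z⟩‖ ^ 2 = 1 / m := by
      intro p
      have : ∀ z : (Fin p.1 → Bool) × Bool, ‖Xv m i ⟨p, z⟩‖ ^ 2 =
          if z = (pre m i p.1, bitf m i p.1) then ((Real.sqrt m)⁻¹ : ℝ) ^ 2 else 0 := by
        intro z
        unfold Xv; simp only [WithLp.ofLp_toLp]
        split <;> simp
      simp only [this]
      rw [Finset.sum_ite_eq' Finset.univ _ (fun _ => ((Real.sqrt m)⁻¹ : ℝ) ^ 2)]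
      simp [rsq m hm]
    simp only [hins, Finset.sum_const, Finset.card_univ, Fintype.card_fin, nsmul_eq_mul]
    field_simp
  rw [this, Real.sqrt_one]

lemma norm_Yv (m i : ℕ) (hm : 0 < m) : ‖Yv m i‖ ≤ 1 := by
  rw [EuclideanSpace.norm_eq]
  rw [show (1:ℝ) = Real.sqrt 1 by simp]
  apply Real.sqrt_le_sqrt
  have : ∑ e : Etyp m, ‖Yv m i e‖ ^ 2 ≤ ∑ p : Fin m, (1 / m : ℝ) := by
    rw [← Finset.univ_sigma_univ, Finset.sum_sigma]
    apply Finset.sum_le_sum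
    intro p _
    have : ∀ z : (Fin p.1 → Bool) × Bool, ‖Yv m i ⟨p, z⟩‖ ^ 2 =
        if bitf m i p.1 = true ∧ z = (pre m i p.1, false) then ((Real.sqrt m)⁻¹ : ℝ) ^ 2 else 0 := by
      intro z
      unfold Yv; simp only [WithLp.ofLp_toLp]
      split <;> simp
    simp only [this]
    rcases Bool.eq_false_or_eq_true (bitf m i p.1) with h | h
    · simp only [h, true_and]
      rw [Finset.sum_ite_eq' Finset.univ _ (fun _ => ((Real.sqrt m)⁻¹ : ℝ) ^ 2)]
      simp [rsq m hm]
    · simp [h]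
  calc ∑ e : Etyp m, ‖Yv m i e‖ ^ 2 ≤ ∑ p : Fin m, (1 / m : ℝ) := this
    _ = 1 := by
        simp only [Finset.sum_const, Finset.card_univ, Fintype.card_fin, nsmul_eq_mul]
        field_simp

open RealInnerProductSpace

lemma inner_XY (m i j : ℕ) : ⟪Xv m i, Yv m j⟫ =
    ∑ p : Fin m, (if bitf m j p.1 = true ∧ (pre m j p.1, false) = (pre m i p.1, bitf m i p.1)
      then ((Real.sqrt m)⁻¹ : ℝ) ^ 2 else 0) := by
  rw [PiLp.inner_apply]
  simp only [RCLike.inner_apply', conj_trivial]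
  rw [← Finset.univ_sigma_univ, Finset.sum_sigma]
  apply Finset.sum_congr rfl
  intro p _
  have hterm : ∀ z : (Fin p.1 → Bool) × Bool,
      Xv m i ⟨p, z⟩ * Yv m j ⟨p, z⟩ =
      if z = (pre m j p.1, false) then
        (if bitf m j p.1 = true ∧ (pre m j p.1, false) = (pre m i p.1, bitf m i p.1)
          then ((Real.sqrt m)⁻¹ : ℝ) ^ 2 else 0) else 0 := by
    intro z
    unfold Xv Yv
    by_cases h1 : z = (pre m i (p:ℕ), bitf m i (p:ℕ)) <;>
      by_cases h2 : bitf m j (p:ℕ) = true <;>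
        by_cases h3 : z = (pre m j (p:ℕ), false) <;>
          simp_all [pow_two] <;> tauto
  simp only [hterm]
  rw [Finset.sum_ite_eq' Finset.univ _ (fun _ => _)]
  simp

lemma cond_iff (m i j : ℕ) (p : Fin m) :
    (bitf m j p.1 = true ∧ (pre m j p.1, false) = (pre m i p.1, bitf m i p.1)) ↔
    ((∀ q < p.1, bitf m i q = bitf m j q) ∧ bitf m i p.1 = false ∧ bitf m j p.1 = true) := by
  rw [Prod.mk.injEq]
  constructor
  · rintro ⟨h1, h2, h3⟩
    refine ⟨fun q hq => ?_, h3.symm, h1⟩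
    have := congrFun h2 ⟨q, hq⟩
    unfold pre at this
    exact this.symm
  · rintro ⟨h1, h2, h3⟩
    refine ⟨h3, ?_, h2.symm⟩
    funext q
    unfold pre
    exact (h1 q q.2).symm

lemma inner_XY_lt (m : ℕ) (hm : 0 < m) {i j : ℕ} (hi : i < 2 ^ m) (hj : j < 2 ^ m)
    (hij : i < j) : ⟪Xv m i, Yv m j⟫ = 1 / (m : ℝ) := by
  obtain ⟨p0, hp0m, hp0⟩ := key hi hj hij
  rw [inner_XY]
  have : ∀ p : Fin m, (if bitf m j p.1 = true ∧ (pre m j p.1, false) = (pre m i p.1, bitf m i p.1)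
      then ((Real.sqrt m)⁻¹ : ℝ) ^ 2 else 0) =
      if p = (⟨p0, hp0m⟩ : Fin m) then ((Real.sqrt m)⁻¹ : ℝ) ^ 2 else 0 := by
    intro p
    congr 1
    rw [cond_iff, hp0 p.1 p.2, Fin.ext_iff]
  simp only [this]
  rw [Finset.sum_ite_eq' Finset.univ _ (fun _ => ((Real.sqrt m)⁻¹ : ℝ) ^ 2)]
  simp [rsq m hm]

lemma inner_XY_gt (m : ℕ) (hm : 0 < m) {i j : ℕ} (hi : i < 2 ^ m) (hj : j < 2 ^ m)
    (hij : i < j) : ⟪Xv m j, Yv m i⟫ = 0 := by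
  rw [inner_XY]
  apply Finset.sum_eq_zero
  intro p _
  rw [if_neg]
  rw [cond_iff]
  rintro ⟨h1, h2, h3⟩
  exact key2 hi hj hij p.2 (fun q hq => (h1 q hq).symm) h2 h3

/-- Half-graph witness construction in Euclidean space of dimension `2^(m+1) - 2`. -/
theorem halfgraph_witness_construction (m : ℕ) (hm : 0 < m) :
    ∃ x y : Fin (2 ^ m) → EuclideanSpace ℝ (Fin (2 ^ (m + 1) - 2)),
      (∀ i, ‖x i‖ = 1) ∧ (∀ i, ‖y i‖ ≤ 1) ∧
      ∀ i j : Fin (2 ^ m), i < j →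
        ⟪x i, y j⟫ = 1 / (m : ℝ) ∧ ⟪x j, y i⟫ = 0 := by
  let e : Etyp m ≃ Fin (2 ^ (m + 1) - 2) := Fintype.equivFinOfCardEq (card_Etyp m)
  let L : EuclideanSpace ℝ (Etyp m) ≃ₗᵢ[ℝ] EuclideanSpace ℝ (Fin (2 ^ (m + 1) - 2)) :=
    LinearIsometryEquiv.piLpCongrLeft 2 ℝ ℝ e
  refine ⟨fun i => L (Xv m i.1), fun i => L (Yv m i.1), fun i => ?_, fun i => ?_, fun i j hij => ?_⟩
  · rw [L.norm_map]; exact norm_Xv m i.1 hm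
  · rw [L.norm_map]; exact norm_Yv m i.1 hm
  · constructor
    · rw [L.inner_map_map]; exact inner_XY_lt m hm i.2 j.2 hij
    · rw [L.inner_map_map]; exact inner_XY_gt m hm i.2 j.2 hij
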